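/- For every natural number n and every λ-term θ β-equivalent to the Church numeral n̲, the head reduction of (T₁)θf reaches the head normal form (f)(s̲)ⁿ0̲, where T₁ = λn((n)δ)G with G = λx λy (x) λz (y)(s̲)z and δ = λf (f)0̲. -/

import Mathlib

/- Untyped λ-calculus with de Bruijn indices, head reduction, Church numerals. -/

inductive Lam : Type
  | var : ℕ → Lam
  | app : Lam → Lam → Lam
  | lam : Lam → Lam
deriving DecidableEq, Repr

namespace Lam

/-- Shift free variables `≥ c` up by 1. -/
def lift (c : ℕ) : Lam → Lam
  | var n => if n < c then var n else var (n + 1)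
  | app s t => app (s.lift c) (t.lift c)
  | lam t => lam (t.lift (c + 1))

/-- Push a substitution under a binder. -/
def up (σ : ℕ → Lam) : ℕ → Lam
  | 0 => var 0
  | n + 1 => (σ n).lift 0

/-- Capture-avoiding simultaneous substitution. -/
def subst (σ : ℕ → Lam) : Lam → Lam
  | var n => σ n
  | app s t => app (s.subst σ) (t.subst σ)
  | lam t => lam (t.subst (up σ))

/-- `t.subst0 u` is `t[u/0]`, the β-contractum substitution. -/
def subst0 (t u : Lam) : Lam :=
  t.subst (fun n => match n with | 0 => u | n + 1 => var n)

/-- `m` occurs free in the term. -/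
def FreeIn (m : ℕ) : Lam → Prop
  | var n => n = m
  | app s t => s.FreeIn m ∨ t.FreeIn m
  | lam t => t.FreeIn (m + 1)

/-- A closed λ-term. -/
def Closed (t : Lam) : Prop := ∀ m, ¬ t.FreeIn m

end Lam

/-- One-step β-reduction (anywhere in the term). -/
inductive Beta : Lam → Lam → Prop
  | beta (t u) : Beta (.app (.lam t) u) (t.subst0 u)
  | appL {s s'} (t) : Beta s s' → Beta (.app s t) (.app s' t)
  | appR {t t'} (s) : Beta t t' → Beta (.app s t) (.app s t')
  | lam {t t'} : Beta t t' → Beta (.lam t) (.lam t')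

/-- β-equivalence `≃β`. -/
def BetaEq : Lam → Lam → Prop := Relation.EqvGen Beta

/-- A term in (β-)normal form. -/
def NormalForm (t : Lam) : Prop := ∀ u, ¬ Beta t u

/-- One step of head reduction: reduce the head redex. -/
inductive HStep : Lam → Lam → Prop
  | beta (t u) : HStep (.app (.lam t) u) (t.subst0 u)
  | lam {t t'} : HStep t t' → HStep (.lam t) (.lam t')
  | app {t t'} (u) : HStep t t' → (∀ s, t ≠ .lam s) → HStep (.app t u) (.app t' u)

/-- `HRedN k u v` : `u ≻ v` by a head reduction of length `h(u,v) = k`. -/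
inductive HRedN : ℕ → Lam → Lam → Prop
  | refl (t) : HRedN 0 t t
  | step {k t u v} : HStep t u → HRedN k u v → HRedN (k + 1) t v

/-- `u ≻ v` : `v` is obtained from `u` by head reduction. -/
def HRed (t u : Lam) : Prop := ∃ k, HRedN k t u

/-- Head normal form: no head redex. -/
def HeadNormal (t : Lam) : Prop := ∀ u, ¬ HStep t u

/-- Solvable: the head reduction terminates. -/
def Solvable (t : Lam) : Prop := ∃ v, HRed t v ∧ HeadNormal v

/-- `(t)u₁…uₙ` : iterated application. -/
def appList : Lam → List Lam → Lam
  | t, [] => t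
  | t, u :: us => appList (t.app u) us

/-- `(f)ⁿ x` with `x = var 1`, `f = var 0`. -/
def churchBody : ℕ → Lam
  | 0 => .var 1
  | n + 1 => .app (.var 0) (churchBody n)

/-- Church numeral `n̲ = λx λf (f)ⁿ x`. -/
def church (n : ℕ) : Lam := .lam (.lam (churchBody n))

/-- `0̲ = λx λf x`. -/
def czero : Lam := .lam (.lam (.var 1))

/-- `s̲ = λn λx λf (f)((n)x)f`. -/
def csucc : Lam := .lam (.lam (.lam (.app (.var 0) (.app (.app (.var 2) (.var 1)) (.var 0)))))

/-- `(s̲)ⁿ 0̲`. -/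
def succIter : ℕ → Lam
  | 0 => czero
  | n + 1 => .app csucc (succIter n)

/-- `G = λx λy (x) λz (y)(s̲)z`. -/
def Gop : Lam := .lam (.lam (.app (.var 1) (.lam (.app (.var 1) (.app csucc (.var 0))))))

/-- `δ = λf (f)0̲`. -/
def deltaOp : Lam := .lam (.app (.var 0) czero)

/-- `T₁ = λn ((n)δ)G`. -/
def T1 : Lam := .lam (.app (.app (.var 0) deltaOp) Gop)

/-- `F = λx λy (x)(s̲)y`. -/
def Fop : Lam := .lam (.lam (.app (.var 1) (.app csucc (.var 0))))

/-- `T₂ = λn λf (((n)f)F)0̲`. -/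
def T2 : Lam := .lam (.lam (.app (.app (.app (.var 1) (.var 0)) Fop) czero))

/-- `θ₀ = λx λf λz (x)(λd z)(λx x)`. -/
def theta0 : Lam := .lam (.lam (.lam (.app (.app (.var 2) (.lam (.var 1))) (.lam (.var 0)))))

/-- `T` is a storage operator for the integers (the fixed variable `f` is `var 0`). -/
def IsStorage (T : Lam) : Prop :=
  ∀ n : ℕ, ∃ τ : Lam, BetaEq τ (church n) ∧
    ∀ θ : Lam, BetaEq θ (church n) →
      ∃ σ : ℕ → Lam, HRed (.app (.app T θ) (.var 0)) (.app (.var 0) (τ.subst σ))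

namespace Lam

/-! ### Renaming and substitution algebra -/

def upr (ρ : ℕ → ℕ) : ℕ → ℕ
  | 0 => 0
  | n + 1 => ρ n + 1

def rename (ρ : ℕ → ℕ) : Lam → Lam
  | var n => var (ρ n)
  | app s t => app (s.rename ρ) (t.rename ρ)
  | lam t => lam (t.rename (upr ρ))

theorem rename_ext {ρ ρ' : ℕ → ℕ} (h : ∀ n, ρ n = ρ' n) :
    ∀ t : Lam, t.rename ρ = t.rename ρ' := by
  intro t
  induction t generalizing ρ ρ' with
  | var n => simp [rename, h n]
  | app s t ihs iht => simp [rename, ihs h, iht h]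
  | lam t ih =>
    simp only [rename, lam.injEq]
    exact ih (fun n => by cases n <;> simp [upr, h])

theorem subst_ext {σ σ' : ℕ → Lam} (h : ∀ n, σ n = σ' n) :
    ∀ t : Lam, t.subst σ = t.subst σ' := by
  intro t
  induction t generalizing σ σ' with
  | var n => simp [subst, h n]
  | app s t ihs iht => simp [subst, ihs h, iht h]
  | lam t ih =>
    simp only [subst, lam.injEq]
    exact ih (fun n => by cases n <;> simp [up, h])

def shiftAt (c : ℕ) : ℕ → ℕ := fun n => if n < c then n else n + 1

theorem lift_eq_rename (t : Lam) : ∀ c, t.lift c = t.rename (shiftAt c) := by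
  induction t with
  | var n =>
    intro c
    simp only [lift, rename, shiftAt]
    by_cases h : n < c <;> simp [h]
  | app s t ihs iht => intro c; simp [lift, rename, ihs, iht]
  | lam t ih =>
    intro c
    simp only [lift, rename, lam.injEq, ih]
    refine rename_ext (fun n => ?_) t
    cases n with
    | zero => simp [upr, shiftAt]
    | succ n =>
      simp only [shiftAt, upr, Nat.succ_lt_succ_iff]
      by_cases h : n < c <;> simp [h]

theorem rename_rename (ρ ρ' : ℕ → ℕ) (t : Lam) :
    (t.rename ρ).rename ρ' = t.rename (fun n => ρ' (ρ n)) := by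
  induction t generalizing ρ ρ' with
  | var n => simp [rename]
  | app s t ihs iht => simp [rename, ihs, iht]
  | lam t ih =>
    simp only [rename, lam.injEq, ih]
    exact rename_ext (fun n => by cases n <;> simp [upr]) t

theorem rename_subst (ρ : ℕ → ℕ) (σ : ℕ → Lam) (t : Lam) :
    (t.rename ρ).subst σ = t.subst (fun n => σ (ρ n)) := by
  induction t generalizing ρ σ with
  | var n => simp [rename, subst]
  | app s t ihs iht => simp [rename, subst, ihs, iht]
  | lam t ih =>
    simp only [rename, subst, lam.injEq, ih]
    exact subst_ext (fun n => by cases n <;> simp [upr, up]) t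

theorem subst_rename (σ : ℕ → Lam) (ρ : ℕ → ℕ) (t : Lam) :
    (t.subst σ).rename ρ = t.subst (fun n => (σ n).rename ρ) := by
  induction t generalizing ρ σ with
  | var n => simp [rename, subst]
  | app s t ihs iht => simp [rename, subst, ihs, iht]
  | lam t ih =>
    simp only [subst, rename, lam.injEq, ih]
    refine subst_ext (fun n => ?_) t
    cases n with
    | zero => simp [up, rename, upr]
    | succ n =>
      simp only [up, lift_eq_rename, rename_rename]
      refine rename_ext (fun m => ?_) (σ n)
      simp [shiftAt, upr]

theorem subst_subst (σ τ : ℕ → Lam) (t : Lam) :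
    (t.subst σ).subst τ = t.subst (fun n => (σ n).subst τ) := by
  induction t generalizing σ τ with
  | var n => simp [subst]
  | app s t ihs iht => simp [subst, ihs, iht]
  | lam t ih =>
    simp only [subst, lam.injEq, ih]
    refine subst_ext (fun n => ?_) t
    cases n with
    | zero => simp [up, subst]
    | succ n =>
      simp only [up, lift_eq_rename, rename_subst, subst_rename]
      refine subst_ext (fun m => ?_) (σ n)
      simp [shiftAt, up, lift_eq_rename]

theorem subst_var (t : Lam) : t.subst var = t := by
  induction t with
  | var n => simp [subst]
  | app s t ihs iht => simp [subst, ihs, iht]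
  | lam t ih =>
    simp only [subst, lam.injEq]
    rw [subst_ext (σ' := var) (fun n => by cases n <;> simp [up, lift]), ih]

theorem lift0_subst0 (t u : Lam) : (t.lift 0).subst0 u = t := by
  rw [subst0, lift_eq_rename, rename_subst]
  rw [subst_ext (σ' := var) (fun n => by simp [shiftAt]), subst_var]

theorem subst0_subst (a b : Lam) (σ : ℕ → Lam) :
    (a.subst0 b).subst σ = (a.subst (up σ)).subst0 (b.subst σ) := by
  simp only [subst0, subst_subst]
  refine subst_ext (fun n => ?_) a
  cases n with
  | zero => rfl
  | succ n => exact (lift0_subst0 (σ n) (b.subst σ)).symm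

theorem subst0_lift (a b : Lam) (c : ℕ) :
    (a.subst0 b).lift c = (a.lift (c + 1)).subst0 (b.lift c) := by
  simp only [subst0, lift_eq_rename, subst_rename, rename_subst]
  refine subst_ext (fun n => ?_) a
  cases n with
  | zero => simp [shiftAt]
  | succ n =>
    simp only [shiftAt, rename, subst]
    by_cases h : n < c <;> simp [h, Nat.succ_lt_succ_iff, subst]

end Lam
namespace Lam

open Relation

/-! ### Weak head reduction -/

inductive WStep : Lam → Lam → Prop
  | beta (t u) : WStep (.app (.lam t) u) (t.subst0 u)
  | app {t t'} (u) : WStep t t' → WStep (.app t u) (.app t' u)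

theorem WStep.isApp {t u : Lam} (h : WStep t u) : ∃ a b, t = .app a b := by
  cases h with
  | beta t u => exact ⟨_, _, rfl⟩
  | app u h => exact ⟨_, _, rfl⟩

theorem WStep.hstep {t u : Lam} (h : WStep t u) : HStep t u := by
  induction h with
  | beta t u => exact HStep.beta t u
  | app u h ih =>
    obtain ⟨a, b, rfl⟩ := h.isApp
    exact HStep.app _ ih (fun s hs => Lam.noConfusion hs)

theorem WStep.toBeta {t u : Lam} (h : WStep t u) : Beta t u := by
  induction h with
  | beta t u => exact Beta.beta t u
  | app u _ ih => exact Beta.appL _ ih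

theorem WStep.subst {t u : Lam} (σ : ℕ → Lam) (h : WStep t u) :
    WStep (t.subst σ) (u.subst σ) := by
  induction h with
  | beta t u =>
    simp only [Lam.subst, subst0_subst]
    exact WStep.beta _ _
  | app u _ ih => exact WStep.app _ ih

theorem WStep.lift {t u : Lam} (c : ℕ) (h : WStep t u) :
    WStep (t.lift c) (u.lift c) := by
  induction h with
  | beta t u =>
    simp only [Lam.lift, subst0_lift]
    exact WStep.beta _ _
  | app u _ ih => exact WStep.app _ ih

/-- Weak head multi-step reduction. -/
abbrev WRed : Lam → Lam → Prop := ReflTransGen WStep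

theorem WRed.appL {t t' : Lam} (u : Lam) (h : WRed t t') :
    WRed (.app t u) (.app t' u) :=
  ReflTransGen.lift (fun x => Lam.app x u) (fun _ _ hh => WStep.app u hh) _ _ h

theorem WRed.subst {t u : Lam} (σ : ℕ → Lam) (h : WRed t u) :
    WRed (t.subst σ) (u.subst σ) :=
  ReflTransGen.lift (fun x => x.subst σ) (fun _ _ hh => hh.subst σ) _ _ h

theorem WRed.lift {t u : Lam} (c : ℕ) (h : WRed t u) :
    WRed (t.lift c) (u.lift c) :=
  ReflTransGen.lift (fun x => x.lift c) (fun _ _ hh => hh.lift c) _ _ h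

/-! ### Beta reduction lemmas -/

theorem Beta.substc {t u : Lam} (σ : ℕ → Lam) (h : Beta t u) :
    Beta (t.subst σ) (u.subst σ) := by
  induction h generalizing σ with
  | beta t u =>
    simp only [Lam.subst, subst0_subst]
    exact Beta.beta _ _
  | appL t _ ih => exact Beta.appL _ (ih σ)
  | appR s _ ih => exact Beta.appR _ (ih σ)
  | lam _ ih => exact Beta.lam (ih (up σ))

abbrev BRed : Lam → Lam → Prop := ReflTransGen Beta

theorem BRed.appL {t t' : Lam} (u : Lam) (h : BRed t t') :
    BRed (.app t u) (.app t' u) :=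
  ReflTransGen.lift (fun x => Lam.app x u) (fun _ _ hh => Beta.appL u hh) _ _ h

theorem BRed.appR {t t' : Lam} (u : Lam) (h : BRed t t') :
    BRed (.app u t) (.app u t') :=
  ReflTransGen.lift (fun x => Lam.app u x) (fun _ _ hh => Beta.appR u hh) _ _ h

theorem BRed.lam {t t' : Lam} (h : BRed t t') : BRed (.lam t) (.lam t') :=
  ReflTransGen.lift (fun x => Lam.lam x) (fun _ _ hh => Beta.lam hh) _ _ h

theorem WRed.toBRed {t u : Lam} (h : WRed t u) : BRed t u :=
  ReflTransGen.mono (fun _ _ hh => hh.toBeta) _ _ h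

/-! ### Kashima's standard reduction relation -/

inductive St : Lam → Lam → Prop
  | var {M : Lam} {x : ℕ} : WRed M (.var x) → St M (.var x)
  | app {M A B A' B' : Lam} : WRed M (.app A B) → St A A' → St B B' → St M (.app A' B')
  | lam {M A A' : Lam} : WRed M (.lam A) → St A A' → St M (.lam A')

theorem St.refl : ∀ t : Lam, St t t := by
  intro t
  induction t with
  | var n => exact St.var ReflTransGen.refl
  | app s t ihs iht => exact St.app ReflTransGen.refl ihs iht
  | lam t ih => exact St.lam ReflTransGen.refl ih

theorem St.wred {M N P : Lam} (h : WRed M N) (h2 : St N P) : St M P := by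
  cases h2 with
  | var h' => exact St.var (h.trans h')
  | app h' a b => exact St.app (h.trans h') a b
  | lam h' a => exact St.lam (h.trans h') a

theorem lift_var (c x : ℕ) : (Lam.var x).lift c = .var (shiftAt c x) := by
  unfold Lam.lift shiftAt; split <;> rfl

theorem St.liftc {M N : Lam} (h : St M N) : ∀ c, St (M.lift c) (N.lift c) := by
  induction h with
  | var h =>
    intro c
    rw [lift_var]
    exact St.var (by simpa [lift_var] using WRed.lift c h)
  | app h _ _ iha ihb =>
    intro c
    exact St.app (by simpa [Lam.lift] using WRed.lift c h) (iha c) (ihb c)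
  | lam h _ ih =>
    intro c
    exact St.lam (by simpa [Lam.lift] using WRed.lift c h) (ih (c + 1))

theorem St.substc {M N : Lam} {σ σ' : ℕ → Lam} (hσ : ∀ n, St (σ n) (σ' n))
    (h : St M N) : St (M.subst σ) (N.subst σ') := by
  induction h generalizing σ σ' with
  | var h => exact St.wred (WRed.subst _ h) (hσ _)
  | app h _ _ iha ihb =>
    exact St.app (by simpa [Lam.subst] using WRed.subst σ h) (iha hσ) (ihb hσ)
  | lam h _ ih =>
    refine St.lam (by simpa [Lam.subst] using WRed.subst σ h) (ih ?_)
    intro n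
    cases n with
    | zero => exact St.refl _
    | succ n => exact (hσ n).liftc 0

theorem St.beta_right {M N N' : Lam} (h : St M N) (hb : Beta N N') : St M N' := by
  induction hb generalizing M with
  | beta t u =>
    cases h with
    | app h1 ha hb' =>
      cases ha with
      | lam h2 ha2 =>
        refine St.wred
          (h1.trans ((WRed.appL _ h2).trans (ReflTransGen.single (WStep.beta _ _)))) ?_
        refine St.substc ?_ ha2
        intro n
        cases n with
        | zero => exact hb'
        | succ n => exact St.refl _
  | appL t _ ih =>
    cases h with
    | app h1 ha hb' => exact St.app h1 (ih ha) hb'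
  | appR s _ ih =>
    cases h with
    | app h1 ha hb' => exact St.app h1 ha (ih hb')
  | lam _ ih =>
    cases h with
    | lam h1 ha => exact St.lam h1 (ih ha)

theorem St.of_bred {M N : Lam} (h : BRed M N) : St M N := by
  induction h with
  | refl => exact St.refl M
  | tail _ hb ih => exact ih.beta_right hb

end Lam
namespace Lam

open Relation

/-! ### Parallel reduction and confluence -/

inductive Par : Lam → Lam → Prop
  | var (x) : Par (.var x) (.var x)
  | lam {t t'} : Par t t' → Par (.lam t) (.lam t')
  | app {a a' b b'} : Par a a' → Par b b' → Par (.app a b) (.app a' b')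
  | beta {a a' b b'} : Par a a' → Par b b' → Par (.app (.lam a) b) (a'.subst0 b')

theorem Par.refl : ∀ t : Lam, Par t t := by
  intro t
  induction t with
  | var n => exact Par.var n
  | app s t ihs iht => exact Par.app ihs iht
  | lam t ih => exact Par.lam ih

theorem beta_toPar {t u : Lam} (h : Beta t u) : Par t u := by
  induction h with
  | beta t u => exact Par.beta (Par.refl t) (Par.refl u)
  | appL t _ ih => exact Par.app ih (Par.refl t)
  | appR s _ ih => exact Par.app (Par.refl s) ih
  | lam _ ih => exact Par.lam ih

theorem Par.toBRed {t u : Lam} (h : Par t u) : BRed t u := by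
  induction h with
  | var x => exact ReflTransGen.refl
  | lam _ ih => exact BRed.lam ih
  | app _ _ iha ihb => exact (BRed.appL _ iha).trans (BRed.appR _ ihb)
  | beta _ _ iha ihb =>
    exact ((BRed.appL _ (BRed.lam iha)).trans (BRed.appR _ ihb)).tail (Beta.beta _ _)

theorem Par.liftc {t t' : Lam} (h : Par t t') : ∀ c, Par (t.lift c) (t'.lift c) := by
  induction h with
  | var x => intro c; exact Par.refl _
  | lam _ ih => intro c; exact Par.lam (ih (c + 1))
  | app _ _ iha ihb => intro c; exact Par.app (iha c) (ihb c)
  | beta _ _ iha ihb =>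
    intro c
    simp only [Lam.lift, subst0_lift]
    exact Par.beta (iha (c + 1)) (ihb c)

theorem Par.substc {t t' : Lam} {σ σ' : ℕ → Lam} (hσ : ∀ n, Par (σ n) (σ' n))
    (h : Par t t') : Par (t.subst σ) (t'.subst σ') := by
  induction h generalizing σ σ' with
  | var x => exact hσ x
  | lam _ ih =>
    refine Par.lam (ih ?_)
    intro n; cases n with
    | zero => exact Par.refl _
    | succ n => exact (hσ n).liftc 0
  | app _ _ iha ihb => exact Par.app (iha hσ) (ihb hσ)
  | beta _ _ iha ihb =>
    simp only [Lam.subst, subst0_subst]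
    refine Par.beta (iha ?_) (ihb hσ)
    intro n; cases n with
    | zero => exact Par.refl _
    | succ n => exact (hσ n).liftc 0

/-- Complete development. -/
def cd : Lam → Lam
  | .var n => .var n
  | .lam t => .lam (cd t)
  | .app (.lam a) b => (cd a).subst0 (cd b)
  | .app (.var n) b => .app (.var n) (cd b)
  | .app (.app a c) b => .app (cd (.app a c)) (cd b)

theorem par_lam_inv {a : Lam} {y : Lam} (h : Par (.lam a) y) :
    ∃ a', y = .lam a' ∧ Par a a' := by
  cases h with
  | lam h => exact ⟨_, rfl, h⟩

theorem Par.triangle {t u : Lam} (h : Par t u) : Par u (cd t) := by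
  induction h with
  | var x => exact Par.refl _
  | lam _ ih => exact Par.lam ih
  | beta _ _ iha ihb =>
    show Par _ (cd (.app (.lam _) _))
    simp only [cd]
    refine Par.substc ?_ iha
    intro n; cases n with
    | zero => exact ihb
    | succ n => exact Par.refl _
  | @app a a' b b' ha hb iha ihb =>
    cases a with
    | var n => exact Par.app iha ihb
    | app a1 a2 => exact Par.app iha ihb
    | lam a0 =>
      obtain ⟨a0', rfl, ha0⟩ := par_lam_inv ha
      obtain ⟨c0, hc, ha0'⟩ := par_lam_inv iha
      show Par _ (cd (.app (.lam a0) b))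
      simp only [cd]
      refine Par.beta ?_ ihb
      have : cd (Lam.lam a0) = .lam (cd a0) := rfl
      rw [this] at hc
      cases hc
      exact ha0'

theorem par_strip : ∀ a b c : Lam, Par a b → Par a c →
    ∃ d, ReflGen Par b d ∧ ReflTransGen Par c d := by
  intro a b c hab hac
  exact ⟨cd a, ReflGen.single hab.triangle, ReflTransGen.single hac.triangle⟩

theorem betaEq_join {a b : Lam} (h : BetaEq a b) : Join BRed a b := by
  have hequiv : Equivalence (Join (ReflTransGen Par)) :=
    Relation.equivalence_join_reflTransGen par_strip
  have key : Join (ReflTransGen Par) a b := by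
    induction h with
    | rel x y hxy => exact ⟨y, ReflTransGen.single (beta_toPar hxy), ReflTransGen.refl⟩
    | refl x => exact hequiv.refl x
    | symm x y _ ih => exact hequiv.symm ih
    | trans x y z _ _ ih1 ih2 => exact hequiv.trans ih1 ih2
  obtain ⟨c, h1, h2⟩ := key
  have conv : ∀ {x y : Lam}, ReflTransGen Par x y → BRed x y := by
    intro x y hxy
    induction hxy with
    | refl => exact ReflTransGen.refl
    | tail _ hp ih => exact ih.trans hp.toBRed
  exact ⟨c, conv h1, conv h2⟩

/-! ### Church numerals are normal -/

theorem churchBody_normal (n : ℕ) : ∀ u, ¬ Beta (churchBody n) u := by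
  induction n with
  | zero => intro u h; cases h
  | succ n ih =>
    intro u h
    cases h with
    | appL _ h => cases h
    | appR _ h => exact ih _ h

theorem church_normal (n : ℕ) : ∀ u, ¬ Beta (church n) u := by
  intro u h
  cases h with
  | lam h =>
    cases h with
    | lam h => exact churchBody_normal n _ h

theorem bred_church {θ : Lam} {n : ℕ} (h : BetaEq θ (church n)) : BRed θ (church n) := by
  obtain ⟨c, h1, h2⟩ := betaEq_join h
  cases h2.cases_head with
  | inl he => rw [he]; exact h1
  | inr he => obtain ⟨d, hd, _⟩ := he; exact absurd hd (church_normal n d)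

end Lam
namespace Lam

open Relation

/-! ### The concrete computation -/

def sstar : ℕ → Lam
  | 0 => Gop
  | 1 => deltaOp
  | n + 2 => .var n

def psi : ℕ → Lam
  | 0 => .var 0
  | k + 1 => .lam (.app ((psi k).lift 0) (.app csucc (.var 0)))

theorem subst_sstar (B : Lam) :
    (B.subst (up (fun m => match m with | 0 => deltaOp | m + 1 => Lam.var m))).subst0 Gop
      = B.subst sstar := by
  rw [subst0, subst_subst]
  refine subst_ext (fun n => ?_) B
  match n with
  | 0 => rfl
  | 1 => rfl
  | (n + 2) => simp [up, Lam.lift, Lam.subst, sstar]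

theorem psi_red (k : ℕ) : ∀ j, ReflTransGen WStep (.app (psi k) (succIter j))
    (.app (.var 0) (succIter (k + j))) := by
  induction k with
  | zero =>
    intro j
    rw [Nat.zero_add]
    exact ReflTransGen.refl
  | succ k ih =>
    intro j
    refine ReflTransGen.head (WStep.beta _ _) ?_
    have e : (Lam.app ((psi k).lift 0) (.app csucc (.var 0))).subst0 (succIter j)
        = .app (psi k) (succIter (j + 1)) := by
      show Lam.app (((psi k).lift 0).subst0 (succIter j)) _ = _
      rw [lift0_subst0]
      rfl
    rw [e]
    have := ih (j + 1)
    rwa [show k + (j + 1) = k + 1 + j by omega] at this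

theorem lemA : ∀ n (ξ : Lam), St ξ (churchBody n) → ∀ k,
    ReflTransGen WStep (.app (ξ.subst sstar) (psi k))
      (.app (.var 0) (succIter (n + k))) := by
  intro n
  induction n with
  | zero =>
    intro ξ h k
    cases h with
    | var h =>
      have h1 : WRed (ξ.subst sstar) deltaOp := by
        have := WRed.subst sstar h
        simpa [Lam.subst, sstar] using this
      refine (WRed.appL _ h1).trans ?_
      refine ReflTransGen.head (WStep.beta _ _) ?_
      show ReflTransGen WStep (.app (psi k) (succIter 0)) _
      have := psi_red k 0
      rwa [show k + 0 = 0 + k by omega] at this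
  | succ n ih =>
    intro ξ h k
    cases h with
    | app h1 ha hb =>
      cases ha with
      | var h2 =>
        rename_i A B
        have hred : WRed (ξ.subst sstar) (.app Gop (B.subst sstar)) := by
          have hx : WRed ξ (.app (.var 0) B) := h1.trans (WRed.appL _ h2)
          have := WRed.subst sstar hx
          simpa [Lam.subst, sstar] using this
        refine (WRed.appL _ hred).trans ?_
        refine ReflTransGen.head (WStep.app _ (WStep.beta _ _)) ?_
        show ReflTransGen WStep
          (.app (.lam (.app ((B.subst sstar).lift 0)
            (.lam (.app (.var 1) (.app csucc (.var 0)))))) (psi k)) _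
        refine ReflTransGen.head (WStep.beta _ _) ?_
        have e : (Lam.app ((B.subst sstar).lift 0)
            (.lam (.app (.var 1) (.app csucc (.var 0))))).subst0 (psi k)
            = .app (B.subst sstar) (psi (k + 1)) := by
          show Lam.app (((B.subst sstar).lift 0).subst0 (psi k)) _ = _
          rw [lift0_subst0]
          rfl
        rw [e]
        have := ih B hb (k + 1)
        rwa [show n + (k + 1) = n + 1 + k by omega] at this

theorem hred_of_wred {t u : Lam} (h : ReflTransGen WStep t u) : HRed t u := by
  induction h using Relation.ReflTransGen.head_induction_on with
  | refl => exact ⟨0, HRedN.refl u⟩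
  | head hstep _ ih =>
    obtain ⟨k, hk⟩ := ih
    exact ⟨k + 1, HRedN.step (WStep.hstep hstep) hk⟩

end Lam

/-- For every `n` and every `θ ≃β n̲`, `(T₁)θf ≻ (f)(s̲)ⁿ0̲` (with `f = var 0`). -/
theorem T1_head_reduction (n : ℕ) (θ : Lam) (h : BetaEq θ (church n)) :
    HRed (.app (.app T1 θ) (.var 0)) (.app (.var 0) (succIter n)) := by
  open Relation Lam in
  have hst : Lam.St θ (.lam (.lam (churchBody n))) := Lam.St.of_bred (Lam.bred_church h)
  cases hst with
  | lam h1 ha =>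
    cases ha with
    | lam h2 hbst =>
      rename_i A B
      refine Lam.hred_of_wred ?_
      refine ReflTransGen.head (Lam.WStep.app _ (Lam.WStep.beta _ _)) ?_
      show ReflTransGen Lam.WStep (.app (.app (.app θ deltaOp) Gop) (.var 0)) _
      refine ReflTransGen.trans
        (Lam.WRed.appL _ (Lam.WRed.appL _ (Lam.WRed.appL _ h1))) ?_
      refine ReflTransGen.head
        (Lam.WStep.app _ (Lam.WStep.app _ (Lam.WStep.beta _ _))) ?_
      refine ReflTransGen.trans
        (Lam.WRed.appL _ (Lam.WRed.appL _
          (Lam.WRed.subst (fun m => match m with | 0 => deltaOp | m + 1 => Lam.var m) h2))) ?_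
      show ReflTransGen Lam.WStep
        (.app (.app (.lam (Lam.subst
          (Lam.up (fun m => match m with | 0 => deltaOp | m + 1 => Lam.var m)) B)) Gop)
          (.var 0)) _
      refine ReflTransGen.head (Lam.WStep.app _ (Lam.WStep.beta _ _)) ?_
      rw [Lam.subst_sstar B]
      have := Lam.lemA n B hbst 0
      rwa [Nat.add_zero] at this
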